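/- arXiv:1603.00285 — 2 statements merged into one kernel-verified Lean document; each statement's English description precedes it below -/
import Mathlib

section
/- Assume the dHSIC setting. Then $\operatorname{dHSIC} = \mathbb{E}\left(\prod_{j=1}^d k^j(X^j_1,X^j_2)\right) + \mathbb{E}\left(\prod_{j=1}^d k^j(X^j_{2j-1},X^j_{2j})\right) - 2\,\mathbb{E}\left(\prod_{j=1}^d k^j(X^j_1,X^j_{j+1})\right)$, where $\mathbf{X}_1,\mathbf{X}_2,\dots$ are iid copies of $\mathbf{X}=(X^1,\dots,X^d)$. -/
open MeasureTheory ProbabilityTheory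

section Aux

variable {Ω β : Type*} [MeasurableSpace Ω] [MeasurableSpace β] {P : Measure Ω}

/-- Reindexing an independent family (with constant codomain) along an injective map. -/
lemma iIndepFun_reindex {ι κ : Type*} {f : ι → Ω → β}
    (h : iIndepFun f P) {e : κ → ι}
    (he : Function.Injective e) :
    iIndepFun (fun k => f (e k)) P := by
  classical
  rw [iIndepFun_iff_measure_inter_preimage_eq_mul] at h ⊢
  intro S sets hsets
  have hS : ∀ k ∈ S, Function.extend e sets (fun _ => Set.univ) (e k) = sets k := by
    intro k _
    exact Function.Injective.extend_apply he _ _ _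
  have h1 : (⋂ k ∈ S, f (e k) ⁻¹' sets k)
      = ⋂ i ∈ S.image e, f i ⁻¹' (Function.extend e sets (fun _ => Set.univ) i) := by
    rw [Finset.set_biInter_finset_image]
    exact Set.iInter₂_congr fun k hk => by rw [hS k hk]
  have h2 : (∏ k ∈ S, P (f (e k) ⁻¹' sets k))
      = ∏ i ∈ S.image e, P (f i ⁻¹' (Function.extend e sets (fun _ => Set.univ) i)) := by
    rw [Finset.prod_image (fun a _ b _ hab => he hab)]
    exact Finset.prod_congr rfl fun k hk => by rw [hS k hk]
  rw [h1, h2]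
  refine h (S.image e) ?_
  intro i hi
  rcases Finset.mem_image.mp hi with ⟨k, hk, rfl⟩
  rw [hS k hk]
  exact hsets k hk

/-- The joint law of a finite independent family is the product of the laws. -/
lemma map_pi_of_iIndepFun {ι : Type*} [Fintype ι] [IsProbabilityMeasure P]
    {β : ι → Type*} [mβ : ∀ i, MeasurableSpace (β i)]
    (g : ∀ i, Ω → β i) (hg : ∀ i, Measurable (g i))
    (hind : iIndepFun g P) :
    P.map (fun ω i => g i ω) = Measure.pi (fun i => P.map (g i)) := by
  haveI : ∀ i, IsProbabilityMeasure (P.map (g i)) :=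
    fun i => Measure.isProbabilityMeasure_map (hg i).aemeasurable
  have hmeas : Measurable (fun ω i => g i ω) := measurable_pi_lambda _ hg
  refine (Measure.pi_eq fun s hs => ?_).symm
  rw [Measure.map_apply hmeas (MeasurableSet.univ_pi hs)]
  have hpre : (fun ω i => g i ω) ⁻¹' Set.pi Set.univ s = ⋂ i ∈ Finset.univ, g i ⁻¹' s i := by
    ext ω; simp [Set.mem_pi]
  rw [hpre, hind.measure_inter_preimage_eq_mul Finset.univ (fun i _ => hs i)]
  exact Finset.prod_congr rfl fun i _ =>
    (Measure.map_apply (hg i) (hs i)).symm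

variable {H : Type*} [NormedAddCommGroup H] [InnerProductSpace ℝ H] [CompleteSpace H]

/-- Expectation of the inner product of features of two independent random elements
is the inner product of the mean embeddings. -/
lemma integral_inner_feature {S : Type*} [MeasurableSpace S] [IsProbabilityMeasure P]
    (φ : S → H) {α β' : Measure S} [IsProbabilityMeasure α] [IsProbabilityMeasure β']
    (hintα : Integrable φ α) (hintβ : Integrable φ β')
    {A B : Ω → S} (hA : Measurable A) (hB : Measurable B)
    (hInd : IndepFun A B P) (hα : P.map A = α) (hβ : P.map B = β') :
    ∫ ω, (inner ℝ (φ (A ω)) (φ (B ω)) : ℝ) ∂P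
      = (inner ℝ (∫ x, φ x ∂α) (∫ x, φ x ∂β') : ℝ) := by
  have hmap : P.map (fun ω => (A ω, B ω)) = α.prod β' := by
    rw [(indepFun_iff_map_prod_eq_prod_map_map hA.aemeasurable hB.aemeasurable).mp hInd,
      hα, hβ]
  set g : S × S → ℝ := fun p => (inner ℝ (φ p.1) (φ p.2) : ℝ) with hg
  have hgm : AEStronglyMeasurable g (α.prod β') :=
    AEStronglyMeasurable.inner (hintα.comp_fst β').1 (hintβ.comp_snd α).1
  have hg_int : Integrable g (α.prod β') := by
    refine Integrable.mono' (hintα.norm.mul_prod hintβ.norm) hgm ?_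
    exact Filter.Eventually.of_forall fun p => norm_inner_le_norm _ _
  have h1 : ∫ ω, (inner ℝ (φ (A ω)) (φ (B ω)) : ℝ) ∂P = ∫ p, g p ∂(α.prod β') := by
    rw [← hmap, integral_map (hA.aemeasurable.prodMk hB.aemeasurable) (hmap ▸ hgm)]
  rw [h1, MeasureTheory.integral_prod g hg_int]
  have h2 : ∀ x : S, (∫ y, (inner ℝ (φ x) (φ y) : ℝ) ∂β')
      = (inner ℝ (φ x) (∫ y, φ y ∂β') : ℝ) := fun x => integral_inner hintβ (φ x)
  calc ∫ x, ∫ y, g (x, y) ∂β' ∂α = ∫ x, (inner ℝ (φ x) (∫ y, φ y ∂β') : ℝ) ∂α := by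
        refine integral_congr_ae (Filter.Eventually.of_forall fun x => ?_)
        simp only [hg]
        exact h2 x
    _ = ∫ x, (inner ℝ (∫ y, φ y ∂β') (φ x) : ℝ) ∂α :=
        integral_congr_ae (Filter.Eventually.of_forall fun x => real_inner_comm _ _)
    _ = (inner ℝ (∫ y, φ y ∂β') (∫ x, φ x ∂α) : ℝ) := integral_inner hintα _
    _ = (inner ℝ (∫ x, φ x ∂α) (∫ x, φ x ∂β') : ℝ) := real_inner_comm _ _

end Aux

theorem dHSIC_kernel_expansion
    {d : ℕ} {X : Fin d → Type*} [∀ j, MeasurableSpace (X j)]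
    {H : Type*} [NormedAddCommGroup H] [InnerProductSpace ℝ H] [CompleteSpace H]
    -- the kernels and a feature map of the tensor-product kernel
    (k : ∀ j, X j → X j → ℝ)
    (φ : (∀ j, X j) → H)
    (hfeature : ∀ x y, (inner ℝ (φ x) (φ y) : ℝ) = ∏ j, k j (x j) (y j))
    -- an iid sequence with law μ
    {Ω : Type*} [MeasurableSpace Ω] (P : Measure Ω) [IsProbabilityMeasure P]
    (Xs : ℕ → Ω → (∀ j, X j))
    (hmeas : ∀ i, Measurable (Xs i))
    (hindep : iIndepFun Xs P)
    (μ : Measure (∀ j, X j)) [IsProbabilityMeasure μ]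
    (hlaw : ∀ i, Measure.map (Xs i) P = μ)
    -- Bochner integrability of the feature map (kernels continuous and bounded)
    (hint1 : Integrable φ μ)
    (hint2 : Integrable φ (Measure.pi fun j => μ.map fun x => x j)) :
    ‖(∫ x, φ x ∂(Measure.pi fun j => μ.map fun x => x j)) - ∫ x, φ x ∂μ‖ ^ 2
      = (∫ ω, ∏ j, k j (Xs 0 ω j) (Xs 1 ω j) ∂P)
        + (∫ ω, ∏ j, k j (Xs (2 * (j : ℕ)) ω j) (Xs (2 * (j : ℕ) + 1) ω j) ∂P)
        - 2 * ∫ ω, ∏ j, k j (Xs 0 ω j) (Xs ((j : ℕ) + 1) ω j) ∂P := by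
  classical
  set ν : Measure (∀ j, X j) := Measure.pi fun j => μ.map fun x => x j with hν
  haveI : ∀ j, IsProbabilityMeasure (μ.map fun x : ∀ j, X j => x j) :=
    fun j => Measure.isProbabilityMeasure_map (measurable_pi_apply j).aemeasurable
  haveI : IsProbabilityMeasure ν := by rw [hν]; infer_instance
  -- coordinate laws
  have hcoord : ∀ (i : ℕ) (j : Fin d),
      P.map (fun ω => Xs i ω j) = μ.map (fun x => x j) := by
    intro i j
    rw [← hlaw i, Measure.map_map (measurable_pi_apply j) (hmeas i)]
    rfl
  -- the three pairs of random elements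
  set Y : Ω → ∀ j, X j := fun ω j => Xs (2 * (j : ℕ)) ω j with hY
  set Z : Ω → ∀ j, X j := fun ω j => Xs (2 * (j : ℕ) + 1) ω j with hZ
  set B : Ω → ∀ j, X j := fun ω j => Xs ((j : ℕ) + 1) ω j with hB
  have hYm : Measurable Y := measurable_pi_lambda _ fun j =>
    (measurable_pi_apply j).comp (hmeas _)
  have hZm : Measurable Z := measurable_pi_lambda _ fun j =>
    (measurable_pi_apply j).comp (hmeas _)
  have hBm : Measurable B := measurable_pi_lambda _ fun j =>
    (measurable_pi_apply j).comp (hmeas _)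
  -- laws of Y, Z, B are ν
  have law_of : ∀ (e : Fin d → ℕ), Function.Injective e →
      P.map (fun ω j => Xs (e j) ω j) = ν := by
    intro e he
    have hind' : iIndepFun (fun j => Xs (e j)) P :=
      iIndepFun_reindex hindep he
    have hind'' : iIndepFun
        (fun j ω => Xs (e j) ω j) P := by
      have := hind'.comp (fun j (x : ∀ j, X j) => x j)
        (fun j => measurable_pi_apply j)
      exact this
    have hmap := map_pi_of_iIndepFun (P := P) (fun j ω => Xs (e j) ω j)
      (fun j => (measurable_pi_apply j).comp (hmeas _)) hind''
    rw [hmap, hν]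
    congr 1
    funext j
    exact hcoord _ j
  have hlawY : P.map Y = ν := law_of _ (fun a b h => by
    simpa using Fin.val_injective (by omega : (a : ℕ) = b))
  have hlawZ : P.map Z = ν := law_of _ (fun a b h => by
    simpa using Fin.val_injective (by omega : (a : ℕ) = b))
  have hlawB : P.map B = ν := law_of _ (fun a b h => by
    simpa using Fin.val_injective (by omega : (a : ℕ) = b))
  -- independence of the pairs
  have hInd01 : IndepFun (Xs 0) (Xs 1) P := hindep.indepFun (by norm_num)
  have hIndYZ : IndepFun Y Z P := by
    classical
    set S : Finset ℕ := Finset.image (fun j : Fin d => 2 * (j : ℕ)) Finset.univ with hS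
    set T : Finset ℕ := Finset.image (fun j : Fin d => 2 * (j : ℕ) + 1) Finset.univ with hT
    have hdisj : Disjoint S T := by
      rw [Finset.disjoint_left]
      intro a haS haT
      simp only [hS, hT, Finset.mem_image] at haS haT
      obtain ⟨x, -, hx⟩ := haS
      obtain ⟨y, -, hy⟩ := haT
      omega
    have hbase := hindep.indepFun_finset S T hdisj hmeas
    have hgS : Measurable (fun (v : ∀ i : S, ∀ j, X j) (j : Fin d) =>
        v ⟨2 * (j : ℕ), Finset.mem_image_of_mem _ (Finset.mem_univ j)⟩ j) :=
      measurable_pi_lambda _ fun j =>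
        (measurable_pi_apply j).comp (measurable_pi_apply _)
    have hgT : Measurable (fun (v : ∀ i : T, ∀ j, X j) (j : Fin d) =>
        v ⟨2 * (j : ℕ) + 1, Finset.mem_image_of_mem _ (Finset.mem_univ j)⟩ j) :=
      measurable_pi_lambda _ fun j =>
        (measurable_pi_apply j).comp (measurable_pi_apply _)
    exact hbase.comp hgS hgT
  have hInd0B : IndepFun (Xs 0) B P := by
    classical
    set S : Finset ℕ := {0} with hS
    set T : Finset ℕ := Finset.image (fun j : Fin d => (j : ℕ) + 1) Finset.univ with hT
    have hdisj : Disjoint S T := by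
      rw [Finset.disjoint_left]
      intro a haS haT
      simp only [hS, hT, Finset.mem_image, Finset.mem_singleton] at haS haT
      obtain ⟨y, -, hy⟩ := haT
      omega
    have hbase := hindep.indepFun_finset S T hdisj hmeas
    have hgS : Measurable (fun (v : ∀ i : S, ∀ j, X j) =>
        v ⟨0, Finset.mem_singleton_self 0⟩) := measurable_pi_apply _
    have hgT : Measurable (fun (v : ∀ i : T, ∀ j, X j) (j : Fin d) =>
        v ⟨(j : ℕ) + 1, Finset.mem_image_of_mem _ (Finset.mem_univ j)⟩ j) :=
      measurable_pi_lambda _ fun j =>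
        (measurable_pi_apply j).comp (measurable_pi_apply _)
    exact hbase.comp hgS hgT
  -- the three expectation identities
  set m : H := ∫ x, φ x ∂ν with hm
  set n : H := ∫ x, φ x ∂μ with hn
  have hT1 : (∫ ω, ∏ j, k j (Xs 0 ω j) (Xs 1 ω j) ∂P) = (inner ℝ n n : ℝ) := by
    have h := integral_inner_feature (P := P) φ hint1 hint1 (hmeas 0) (hmeas 1)
      hInd01 (hlaw 0) (hlaw 1)
    simp only [hfeature] at h
    rw [← hn] at h
    exact h
  have hT2 : (∫ ω, ∏ j, k j (Xs (2 * (j : ℕ)) ω j) (Xs (2 * (j : ℕ) + 1) ω j) ∂P)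
      = (inner ℝ m m : ℝ) := by
    have h := integral_inner_feature (P := P) φ hint2 hint2 hYm hZm hIndYZ hlawY hlawZ
    simp only [hfeature, hY, hZ] at h
    rw [← hm] at h
    exact h
  have hT3 : (∫ ω, ∏ j, k j (Xs 0 ω j) (Xs ((j : ℕ) + 1) ω j) ∂P)
      = (inner ℝ n m : ℝ) := by
    have h := integral_inner_feature (P := P) φ hint1 hint2 (hmeas 0) hBm hInd0B
      (hlaw 0) hlawB
    simp only [hfeature, hB] at h
    rw [← hm, ← hn] at h
    exact h
  rw [hT1, hT2, hT3, norm_sub_sq_real, ← real_inner_self_eq_norm_sq,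
    ← real_inner_self_eq_norm_sq, real_inner_comm n m]
  ring
end

section
/- Define $h:\mathcal{X}^{2d}\to\mathbb{R}$ by symmetrizing over all permutations $\pi \in S_{2d}$ of the three kernel-product terms of dHSIC. Then $h$ is symmetric, and if each kernel $k^j$ is continuous and bounded, $h$ is continuous and bounded; moreover $\mathbb{E}[h(\mathbf{X}_1,\dots,\mathbf{X}_{2d})] = \operatorname{dHSIC}$ and the V-statistic $V_n(h)$ equals $\widehat{\operatorname{dHSIC}}_n$. -/
set_option maxHeartbeats 1000000

open MeasureTheory ProbabilityTheory

/-- The symmetrized dHSIC core function `h` of degree `2(d+1)` (for `d+1` variables). -/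
noncomputable def dhsicCore (d : ℕ) {X : Fin (d + 1) → Type*}
    (k : ∀ j, X j → X j → ℝ)
    (z : Fin (2 * (d + 1)) → ∀ j, X j) : ℝ :=
  (((2 * (d + 1)).factorial : ℝ))⁻¹ *
    ∑ π : Equiv.Perm (Fin (2 * (d + 1))),
      ((∏ j, k j (z (π ⟨0, by omega⟩) j) (z (π ⟨1, by omega⟩) j))
        + (∏ j, k j (z (π ⟨2 * (j : ℕ), by have := j.isLt; omega⟩) j)
            (z (π ⟨2 * (j : ℕ) + 1, by have := j.isLt; omega⟩) j))
        - 2 * ∏ j, k j (z (π ⟨0, by omega⟩) j)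
            (z (π ⟨(j : ℕ) + 1, by have := j.isLt; omega⟩) j))

/-- The dHSIC V-estimator for `d+1` variables on a sample of size `n`. -/
noncomputable def dhsicEstimator (d n : ℕ) {X : Fin (d + 1) → Type*}
    (k : ∀ j, X j → X j → ℝ) (x : Fin n → ∀ j, X j) : ℝ :=
  ((n : ℝ) ^ 2)⁻¹ * (∑ f : Fin 2 → Fin n, ∏ j, k j (x (f 0) j) (x (f 1) j))
    + ((n : ℝ) ^ (2 * (d + 1)))⁻¹ *
      (∑ f : Fin (2 * (d + 1)) → Fin n, ∏ j,
        k j (x (f ⟨2 * (j : ℕ), by have := j.isLt; omega⟩)  j)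
          (x (f ⟨2 * (j : ℕ) + 1, by have := j.isLt; omega⟩) j))
    - 2 * ((n : ℝ) ^ (d + 2))⁻¹ *
      (∑ f : Fin (d + 2) → Fin n, ∏ j,
        k j (x (f 0) j) (x (f ⟨(j : ℕ) + 1, by have := j.isLt; omega⟩) j))

noncomputable def gCore (d : ℕ) {X : Fin (d + 1) → Type*}
    (k : ∀ j, X j → X j → ℝ)
    (w : Fin (2 * (d + 1)) → ∀ j, X j) : ℝ :=
  (∏ j, k j (w ⟨0, by omega⟩ j) (w ⟨1, by omega⟩ j))
    + (∏ j, k j (w ⟨2 * (j : ℕ), by have := j.isLt; omega⟩ j)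
        (w ⟨2 * (j : ℕ) + 1, by have := j.isLt; omega⟩ j))
    - 2 * ∏ j, k j (w ⟨0, by omega⟩ j) (w ⟨(j : ℕ) + 1, by have := j.isLt; omega⟩ j)

lemma sum_perm_comp {m : ℕ} {α : Type*} (G : (Fin m → α) → ℝ)
    (σ : Equiv.Perm (Fin m)) (z : Fin m → α) :
    ∑ π : Equiv.Perm (Fin m), G ((z ∘ σ) ∘ π) = ∑ π : Equiv.Perm (Fin m), G (z ∘ π) :=
  Fintype.sum_equiv (Equiv.mulLeft σ) _ _ fun π => rfl

lemma sum_fun_comp_perm {m n : ℕ} (G : (Fin m → Fin n) → ℝ) (π : Equiv.Perm (Fin m)) :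
    ∑ f : Fin m → Fin n, G (f ∘ π) = ∑ f : Fin m → Fin n, G f := by
  refine Fintype.sum_bijective (fun f => f ∘ ⇑π) ⟨?_, ?_⟩ _ _ fun f => rfl
  · intro f g h
    funext i
    have := congrFun h (π.symm i)
    simpa using this
  · intro g
    exact ⟨g ∘ ⇑π.symm, funext fun i => by simp⟩

def finSnocEquiv (m : ℕ) (β : Type*) : ((Fin m → β) × β) ≃ (Fin (m + 1) → β) where
  toFun p := Fin.snoc p.1 p.2
  invFun f := (fun i => f i.castSucc, f (Fin.last m))
  left_inv p := by
    ext i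
    · simp
    · simp
  right_inv f := by
    funext i
    induction i using Fin.lastCases <;> simp

lemma sum_comp_castLE {n : ℕ} : ∀ {m r : ℕ} (h : r ≤ m) (F : (Fin r → Fin n) → ℝ),
    ∑ f : Fin m → Fin n, F (fun i => f (Fin.castLE h i))
      = (n : ℝ) ^ (m - r) * ∑ g : Fin r → Fin n, F g := by
  intro m
  induction m with
  | zero =>
    intro r h F
    interval_cases r
    simp only [Nat.sub_self, pow_zero, one_mul]
    exact Finset.sum_congr rfl fun f _ =>
      congrArg F (funext fun i => congrArg f (Fin.ext rfl))
  | succ m ih =>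
    intro r h F
    rcases Nat.lt_or_ge r (m + 1) with hr | hr
    · have h' : r ≤ m := by omega
      have e1 : ∑ f : Fin (m + 1) → Fin n, F (fun i => f (Fin.castLE h i))
          = ∑ p : (Fin m → Fin n) × Fin n,
              F (fun i => (Fin.snoc p.1 p.2 : Fin (m+1) → Fin n) (Fin.castLE h i)) :=
        (Fintype.sum_equiv (finSnocEquiv m (Fin n)) _ _ fun p => rfl).symm
      rw [e1]
      have e2 : ∀ (p : (Fin m → Fin n) × Fin n),
          (fun i => (Fin.snoc p.1 p.2 : Fin (m+1) → Fin n) (Fin.castLE h i))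
            = fun i => p.1 (Fin.castLE h' i) := by
        intro p
        funext i
        have : Fin.castLE h i = Fin.castSucc (Fin.castLE h' i) := Fin.ext rfl
        rw [this, Fin.snoc_castSucc]
      simp_rw [e2]
      rw [Fintype.sum_prod_type]
      simp only [Finset.sum_const, Finset.card_univ, Fintype.card_fin, nsmul_eq_mul]
      rw [← Finset.mul_sum, ih h' F]
      have : m + 1 - r = (m - r) + 1 := by omega
      rw [this, pow_succ]
      ring
    · have hr' : r = m + 1 := by omega
      subst hr'
      simp only [Nat.sub_self, pow_zero, one_mul]
      exact Finset.sum_congr rfl fun f _ =>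
        congrArg F (funext fun i => congrArg f (Fin.ext rfl))


section MeasureHelpers

lemma joint_law {E : Type*} [MeasurableSpace E] {Ω : Type*} [MeasurableSpace Ω]
    {P : Measure Ω} [IsProbabilityMeasure P]
    {Xs : ℕ → Ω → E} (hmeas : ∀ i, Measurable (Xs i))
    (hindep : iIndepFun Xs P)
    {μ : Measure E} (hlaw : ∀ i, Measure.map (Xs i) P = μ)
    {r : ℕ} (c : Fin r → ℕ) (hc : Function.Injective c) :
    Measure.map (fun ω => fun t : Fin r => Xs (c t) ω) P
      = Measure.pi (fun _ : Fin r => μ) := by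
  have hμ : IsProbabilityMeasure μ := by
    rw [← hlaw 0]; exact Measure.isProbabilityMeasure_map (hmeas 0).aemeasurable
  have hT : Measurable (fun ω => fun t : Fin r => Xs (c t) ω) :=
    measurable_pi_lambda _ fun t => hmeas (c t)
  refine (Measure.pi_eq fun s hs => ?_).symm
  rw [Measure.map_apply hT (MeasurableSet.univ_pi hs)]
  have hpre : (fun ω => fun t : Fin r => Xs (c t) ω) ⁻¹' (Set.pi Set.univ s)
      = ⋂ t : Fin r, Xs (c t) ⁻¹' s t := by
    ext ω; simp [Set.mem_pi]
  rw [hpre]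
  classical
  set sets : ℕ → Set E := fun i =>
    if h : ∃ t, c t = i then s h.choose else Set.univ with hsets
  have hsc : ∀ t, sets (c t) = s t := by
    intro t
    have hex : ∃ t', c t' = c t := ⟨t, rfl⟩
    rw [hsets]
    simp only [dif_pos hex]
    exact congrArg s (hc hex.choose_spec)
  have hsm : ∀ i ∈ Finset.image c Finset.univ, MeasurableSet (sets i) := by
    intro i _
    rw [hsets]
    by_cases h : ∃ t, c t = i
    · simpa only [dif_pos h] using hs _
    · simp only [dif_neg h]
      exact MeasurableSet.univ
  have key := hindep.measure_inter_preimage_eq_mul (Finset.image c Finset.univ) hsm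
  have h1 : (⋂ i ∈ Finset.image c Finset.univ, Xs i ⁻¹' sets i)
      = ⋂ t : Fin r, Xs (c t) ⁻¹' s t := by
    rw [Finset.set_biInter_finset_image]
    simp only [Finset.mem_univ, Set.iInter_true]
    exact Set.iInter_congr fun t => by rw [hsc t]
  have h2 : (∏ i ∈ Finset.image c Finset.univ, P (Xs i ⁻¹' sets i))
      = ∏ t : Fin r, μ (s t) := by
    rw [Finset.prod_image (fun a _ b _ hab => hc hab)]
    refine Finset.prod_congr rfl fun t _ => ?_
    rw [hsc t, ← hlaw (c t), Measure.map_apply (hmeas (c t)) (hs t)]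
  rw [← h1, key, h2]

lemma diag_law {d : ℕ} {X : Fin (d + 1) → Type*} [∀ j, MeasurableSpace (X j)]
    (μ : Measure (∀ j, X j)) [IsProbabilityMeasure μ] :
    Measure.map (fun (w : Fin (d + 1) → ∀ j, X j) => fun j => w j j)
        (Measure.pi fun _ : Fin (d + 1) => μ)
      = Measure.pi (fun j => μ.map fun x => x j) := by
  have hD : Measurable (fun (w : Fin (d + 1) → ∀ j, X j) => fun j => w j j) :=
    measurable_pi_lambda _ fun j => (measurable_pi_apply j).comp (measurable_pi_apply j)
  haveI : ∀ j, IsProbabilityMeasure (μ.map fun x => x j) := fun j =>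
    Measure.isProbabilityMeasure_map (measurable_pi_apply j).aemeasurable
  refine (Measure.pi_eq fun s hs => ?_).symm
  rw [Measure.map_apply hD (MeasurableSet.univ_pi hs)]
  have hpre : (fun (w : Fin (d + 1) → ∀ j, X j) => fun j => w j j) ⁻¹' (Set.pi Set.univ s)
      = Set.pi Set.univ (fun j => (fun e : ∀ j', X j' => e j) ⁻¹' s j) := by
    ext w; simp [Set.mem_pi]
  rw [hpre, Measure.pi_pi]
  exact Finset.prod_congr rfl fun j _ =>
    (Measure.map_apply (measurable_pi_apply j) (hs j)).symm

lemma pair_integral {E : Type*} [MeasurableSpace E] {H : Type*} [NormedAddCommGroup H]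
    [InnerProductSpace ℝ H] [CompleteSpace H]
    (φ : E → H) (ρ σ : Measure E) [IsProbabilityMeasure ρ] [IsProbabilityMeasure σ]
    (hρ : Integrable φ ρ) (hσ : Integrable φ σ) :
    Integrable (fun p : E × E => (inner ℝ (φ p.1) (φ p.2) : ℝ)) (ρ.prod σ) ∧
    ∫ p : E × E, (inner ℝ (φ p.1) (φ p.2) : ℝ) ∂(ρ.prod σ)
      = (inner ℝ (∫ x, φ x ∂ρ) (∫ x, φ x ∂σ) : ℝ) := by
  have hm : AEStronglyMeasurable (fun p : E × E => (inner ℝ (φ p.1) (φ p.2) : ℝ)) (ρ.prod σ) :=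
    AEStronglyMeasurable.inner hρ.aestronglyMeasurable.comp_fst hσ.aestronglyMeasurable.comp_snd
  have hbd : Integrable (fun p : E × E => ‖φ p.1‖ * ‖φ p.2‖) (ρ.prod σ) :=
    hρ.norm.mul_prod hσ.norm
  have hint : Integrable (fun p : E × E => (inner ℝ (φ p.1) (φ p.2) : ℝ)) (ρ.prod σ) := by
    refine hbd.mono' hm (Filter.Eventually.of_forall fun p => ?_)
    exact norm_inner_le_norm _ _
  refine ⟨hint, ?_⟩
  rw [integral_prod _ hint]
  have h1 : ∀ x : E, ∫ y, (inner ℝ (φ x) (φ y) : ℝ) ∂σ = (inner ℝ (φ x) (∫ y, φ y ∂σ) : ℝ) :=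
    fun x => integral_inner hσ (φ x)
  simp_rw [h1]
  have h2 : ∀ x : E, (inner ℝ (φ x) (∫ y, φ y ∂σ) : ℝ) = (inner ℝ (∫ y, φ y ∂σ) (φ x) : ℝ) :=
    fun x => real_inner_comm _ _
  simp_rw [h2]
  rw [integral_inner hρ]
  exact real_inner_comm _ _

end MeasureHelpers

section KeyInt

lemma key_int {d : ℕ} {X : Fin (d + 1) → Type*} [∀ j, MeasurableSpace (X j)]
    (k : ∀ j, X j → X j → ℝ)
    {H : Type*} [NormedAddCommGroup H] [InnerProductSpace ℝ H] [CompleteSpace H]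
    (φ : (∀ j, X j) → H)
    (hfeature : ∀ x y, (inner ℝ (φ x) (φ y) : ℝ) = ∏ j, k j (x j) (y j))
    {Ω : Type*} [MeasurableSpace Ω] (P : Measure Ω) [IsProbabilityMeasure P]
    (Xs : ℕ → Ω → (∀ j, X j))
    (hmeas : ∀ i, Measurable (Xs i))
    (hindep : iIndepFun Xs P)
    (c₀ c₁ : Fin (d + 1) → ℕ)
    (hdisj : ∀ t t', c₀ t ≠ c₁ t')
    (ρ σ' : Measure (∀ j, X j)) [IsProbabilityMeasure ρ] [IsProbabilityMeasure σ']
    (hρ : Measure.map (fun ω => fun j => Xs (c₀ j) ω j) P = ρ)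
    (hσ : Measure.map (fun ω => fun j => Xs (c₁ j) ω j) P = σ')
    (hIρ : Integrable φ ρ) (hIσ : Integrable φ σ') :
    Integrable (fun ω => ∏ j, k j (Xs (c₀ j) ω j) (Xs (c₁ j) ω j)) P ∧
    ∫ ω, ∏ j, k j (Xs (c₀ j) ω j) (Xs (c₁ j) ω j) ∂P
      = (inner ℝ (∫ x, φ x ∂ρ) (∫ x, φ x ∂σ') : ℝ) := by
  classical
  set u : Ω → ∀ j, X j := fun ω => fun j => Xs (c₀ j) ω j with hu_def
  set v : Ω → ∀ j, X j := fun ω => fun j => Xs (c₁ j) ω j with hv_def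
  have hu : Measurable u :=
    measurable_pi_lambda _ fun j => (measurable_pi_apply j).comp (hmeas (c₀ j))
  have hv : Measurable v :=
    measurable_pi_lambda _ fun j => (measurable_pi_apply j).comp (hmeas (c₁ j))
  -- independence of u and v
  have hST : Disjoint (Finset.image c₀ Finset.univ) (Finset.image c₁ Finset.univ) := by
    rw [Finset.disjoint_left]
    rintro i hi hj
    rw [Finset.mem_image] at hi hj
    obtain ⟨t, _, rfl⟩ := hi
    obtain ⟨t', _, ht'⟩ := hj
    exact hdisj t t' ht'.symm
  have base := hindep.indepFun_finset (Finset.image c₀ Finset.univ)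
    (Finset.image c₁ Finset.univ) hST hmeas
  have hgS : Measurable (fun (w : ∀ i : (Finset.image c₀ Finset.univ : Finset ℕ), (∀ j, X j)) =>
      (fun j => w ⟨c₀ j, Finset.mem_image_of_mem c₀ (Finset.mem_univ j)⟩ j : ∀ j, X j)) :=
    measurable_pi_lambda _ fun j => (measurable_pi_apply j).comp (measurable_pi_apply _)
  have hgT : Measurable (fun (w : ∀ i : (Finset.image c₁ Finset.univ : Finset ℕ), (∀ j, X j)) =>
      (fun j => w ⟨c₁ j, Finset.mem_image_of_mem c₁ (Finset.mem_univ j)⟩ j : ∀ j, X j)) :=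
    measurable_pi_lambda _ fun j => (measurable_pi_apply j).comp (measurable_pi_apply _)
  have huv : IndepFun u v P := base.comp hgS hgT
  have hmapuv : Measure.map (fun ω => (u ω, v ω)) P = ρ.prod σ' := by
    rw [← hρ, ← hσ]
    exact (indepFun_iff_map_prod_eq_prod_map_map hu.aemeasurable hv.aemeasurable).mp huv
  obtain ⟨hI, hV⟩ := pair_integral φ ρ σ' hIρ hIσ
  have hm : AEStronglyMeasurable (fun p : (∀ j, X j) × (∀ j, X j) =>
      (inner ℝ (φ p.1) (φ p.2) : ℝ)) (Measure.map (fun ω => (u ω, v ω)) P) := by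
    rw [hmapuv]; exact hI.aestronglyMeasurable
  have hpair : AEMeasurable (fun ω => (u ω, v ω)) P := (hu.prodMk hv).aemeasurable
  have hIcomp : Integrable (fun ω => (inner ℝ (φ (u ω)) (φ (v ω)) : ℝ)) P := by
    have := (integrable_map_measure hm hpair).mp (by rw [hmapuv]; exact hI)
    exact this
  have hfe : (fun ω => ∏ j, k j (Xs (c₀ j) ω j) (Xs (c₁ j) ω j))
      = fun ω => (inner ℝ (φ (u ω)) (φ (v ω)) : ℝ) := by
    funext ω
    exact (hfeature (u ω) (v ω)).symm
  constructor
  · rw [hfe]; exact hIcomp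
  · calc ∫ ω, ∏ j, k j (Xs (c₀ j) ω j) (Xs (c₁ j) ω j) ∂P
        = ∫ ω, (inner ℝ (φ (u ω)) (φ (v ω)) : ℝ) ∂P := by rw [hfe]
      _ = ∫ p, (inner ℝ (φ p.1) (φ p.2) : ℝ) ∂(Measure.map (fun ω => (u ω, v ω)) P) :=
        (integral_map hpair hm).symm
      _ = ∫ p, (inner ℝ (φ p.1) (φ p.2) : ℝ) ∂(ρ.prod σ') := by rw [hmapuv]
      _ = (inner ℝ (∫ x, φ x ∂ρ) (∫ x, φ x ∂σ') : ℝ) := hV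

end KeyInt
lemma gCore_bound (d : ℕ) {X : Fin (d + 1) → Type*} (k : ∀ j, X j → X j → ℝ)
    {D : ℝ} (hD0 : 0 ≤ D)
    (habs : ∀ a b : ∀ j, X j, |∏ j, k j (a j) (b j)| ≤ D)
    (w : Fin (2 * (d + 1)) → ∀ j, X j) : |gCore d k w| ≤ 4 * D := by
  have hA : |∏ j, k j (w ⟨0, by omega⟩ j) (w ⟨1, by omega⟩ j)| ≤ D := habs _ _
  have hB : |∏ j, k j (w ⟨2 * (j : ℕ), by have := j.isLt; omega⟩ j)
      (w ⟨2 * (j : ℕ) + 1, by have := j.isLt; omega⟩ j)| ≤ D := habs _ _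
  have hc : |∏ j, k j (w ⟨0, by omega⟩ j)
      (w ⟨(j : ℕ) + 1, by have := j.isLt; omega⟩ j)| ≤ D := habs _ _
  unfold gCore
  rw [sub_eq_add_neg]
  refine (abs_add_le _ _).trans ?_
  rw [abs_neg, abs_mul, abs_two]
  have h2 := abs_add_le (∏ j, k j (w ⟨0, by omega⟩ j) (w ⟨1, by omega⟩ j))
    (∏ j, k j (w ⟨2 * (j : ℕ), by have := j.isLt; omega⟩ j)
      (w ⟨2 * (j : ℕ) + 1, by have := j.isLt; omega⟩ j))
  linarith

lemma dhsicCore_eq (d : ℕ) {X : Fin (d + 1) → Type*}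
    (k : ∀ j, X j → X j → ℝ) (z : Fin (2 * (d + 1)) → ∀ j, X j) :
    dhsicCore d k z
      = (((2 * (d + 1)).factorial : ℝ))⁻¹ *
        ∑ π : Equiv.Perm (Fin (2 * (d + 1))), gCore d k (z ∘ π) := rfl

theorem dhsicCore_properties
    {d : ℕ} {X : Fin (d + 1) → Type*}
    [∀ j, MeasurableSpace (X j)] [∀ j, TopologicalSpace (X j)]
    (k : ∀ j, X j → X j → ℝ)
    (hkcont : ∀ j, Continuous (fun p : X j × X j => k j p.1 p.2))
    (hkbdd : ∀ j, ∃ C : ℝ, ∀ a b, |k j a b| ≤ C)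
    -- a feature map of the tensor-product kernel into an RKHS
    {H : Type*} [NormedAddCommGroup H] [InnerProductSpace ℝ H] [CompleteSpace H]
    (φ : (∀ j, X j) → H)
    (hfeature : ∀ x y, (inner ℝ (φ x) (φ y) : ℝ) = ∏ j, k j (x j) (y j))
    -- an iid sequence with law μ
    {Ω : Type*} [MeasurableSpace Ω] (P : Measure Ω) [IsProbabilityMeasure P]
    (Xs : ℕ → Ω → (∀ j, X j))
    (hmeas : ∀ i, Measurable (Xs i))
    (hindep : iIndepFun Xs P)
    (μ : Measure (∀ j, X j)) [IsProbabilityMeasure μ]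
    (hlaw : ∀ i, Measure.map (Xs i) P = μ)
    (hint1 : Integrable φ μ)
    (hint2 : Integrable φ (Measure.pi fun j => μ.map fun x => x j)) :
    -- (a) h is symmetric
    (∀ (σ : Equiv.Perm (Fin (2 * (d + 1)))) (z : Fin (2 * (d + 1)) → ∀ j, X j),
        dhsicCore d k (z ∘ σ) = dhsicCore d k z)
    -- (b) h is continuous
    ∧ Continuous (dhsicCore d k)
    -- (c) h is bounded
    ∧ (∃ C : ℝ, ∀ z, |dhsicCore d k z| ≤ C)
    -- (d) θ_h = E h(X₁,…,X_{2(d+1)}) = dHSIC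
    ∧ (∫ ω, dhsicCore d k (fun i => Xs (i : ℕ) ω) ∂P
        = ‖(∫ x, φ x ∂(Measure.pi fun j => μ.map fun x => x j)) - ∫ x, φ x ∂μ‖ ^ 2)
    -- (e) the V-statistic of h equals the dHSIC estimator
    ∧ (∀ (n : ℕ) (x : Fin n → ∀ j, X j),
        ((n : ℝ) ^ (2 * (d + 1)))⁻¹ *
            (∑ f : Fin (2 * (d + 1)) → Fin n, dhsicCore d k (x ∘ f))
          = dhsicEstimator d n k x) := by

  refine ⟨?_, ?_, ?_, ?_, ?_⟩
  -- (a) symmetry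
  · intro σ z
    rw [dhsicCore_eq, dhsicCore_eq]
    congr 1
    exact sum_perm_comp (gCore d k) σ z
  -- (b) continuity
  · unfold dhsicCore
    refine Continuous.mul continuous_const (continuous_finset_sum _ fun π _ => ?_)
    refine Continuous.sub (Continuous.add ?_ ?_) (Continuous.mul continuous_const ?_) <;>
      refine continuous_finset_prod _ fun j _ => (hkcont j).comp (Continuous.prodMk
        ((continuous_apply j).comp (continuous_apply _))
        ((continuous_apply j).comp (continuous_apply _)))
  -- (c) boundedness
  · classical
    choose C hC using hkbdd
    set D : ℝ := ∏ j, max (C j) 0 with hD_def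
    have hD0 : 0 ≤ D := Finset.prod_nonneg fun j _ => le_max_right _ _
    have habs : ∀ a b : ∀ j, X j, |∏ j, k j (a j) (b j)| ≤ D := by
      intro a b
      rw [Finset.abs_prod]
      exact Finset.prod_le_prod (fun j _ => abs_nonneg _)
        fun j _ => (hC j _ _).trans (le_max_left _ _)
    refine ⟨(((2 * (d + 1)).factorial : ℝ))⁻¹ *
      ((Fintype.card (Equiv.Perm (Fin (2 * (d + 1)))) : ℝ) * (4 * D)), fun z => ?_⟩
    rw [dhsicCore_eq, abs_mul, abs_of_nonneg (inv_nonneg.mpr (Nat.cast_nonneg _))]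
    refine mul_le_mul_of_nonneg_left ?_ (inv_nonneg.mpr (Nat.cast_nonneg _))
    refine (Finset.abs_sum_le_sum_abs _ _).trans ?_
    have := Finset.sum_le_card_nsmul Finset.univ (fun π : Equiv.Perm (Fin (2 * (d + 1))) =>
      |gCore d k (z ∘ π)|) (4 * D) (fun π _ => gCore_bound d k hD0 habs _)
    simpa [Finset.card_univ, nsmul_eq_mul] using this
  -- (d) expectation
  · classical
    haveI : ∀ j, IsProbabilityMeasure (μ.map fun x => x j) := fun j =>
      Measure.isProbabilityMeasure_map (measurable_pi_apply j).aemeasurable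
    haveI : IsProbabilityMeasure (Measure.pi fun j => μ.map fun x => x j) := by infer_instance
    have hfac : (((2 * (d + 1)).factorial : ℕ) : ℝ) ≠ 0 :=
      Nat.cast_ne_zero.mpr (Nat.factorial_ne_zero _)
    have lawinj : ∀ c : Fin (d + 1) → ℕ, Function.Injective c →
        Measure.map (fun ω => fun j => Xs (c j) ω j) P
          = Measure.pi (fun j => μ.map fun x => x j) := by
      intro c hc
      have h1 := joint_law hmeas hindep hlaw c hc
      have hT : Measurable (fun ω => fun t : Fin (d + 1) => Xs (c t) ω) :=
        measurable_pi_lambda _ fun t => hmeas (c t)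
      have hD : Measurable (fun (w : Fin (d + 1) → ∀ j, X j) => fun j => w j j) :=
        measurable_pi_lambda _ fun j => (measurable_pi_apply j).comp (measurable_pi_apply j)
      have h2 := Measure.map_map (μ := P) hD hT
      rw [h1] at h2
      exact h2.symm.trans (diag_law μ)
    have hterm : ∀ π : Equiv.Perm (Fin (2 * (d + 1))),
        Integrable (fun ω => gCore d k ((fun i : Fin (2 * (d + 1)) => Xs (i : ℕ) ω) ∘ ⇑π)) P ∧
        ∫ ω, gCore d k ((fun i : Fin (2 * (d + 1)) => Xs (i : ℕ) ω) ∘ ⇑π) ∂P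
          = (inner ℝ (∫ x, φ x ∂μ) (∫ x, φ x ∂μ) : ℝ)
            + (inner ℝ (∫ x, φ x ∂(Measure.pi fun j => μ.map fun x => x j))
                (∫ x, φ x ∂(Measure.pi fun j => μ.map fun x => x j)) : ℝ)
            - 2 * (inner ℝ (∫ x, φ x ∂μ)
                (∫ x, φ x ∂(Measure.pi fun j => μ.map fun x => x j)) : ℝ) := by
      intro π
      obtain ⟨iA, vA⟩ := key_int k φ hfeature P Xs hmeas hindep
        (fun _ => ((π ⟨0, by omega⟩ : Fin (2 * (d + 1))) : ℕ))
        (fun _ => ((π ⟨1, by omega⟩ : Fin (2 * (d + 1))) : ℕ))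
        (by
          intro t t' h
          have h2 := π.injective (Fin.val_injective h)
          rw [Fin.mk.injEq] at h2
          omega)
        μ μ (hlaw _) (hlaw _) hint1 hint1
      obtain ⟨iB, vB⟩ := key_int k φ hfeature P Xs hmeas hindep
        (fun j => ((π ⟨2 * (j : ℕ), by have := j.isLt; omega⟩ : Fin (2 * (d + 1))) : ℕ))
        (fun j => ((π ⟨2 * (j : ℕ) + 1, by have := j.isLt; omega⟩ : Fin (2 * (d + 1))) : ℕ))
        (by
          intro t t' h
          have h2 := π.injective (Fin.val_injective h)
          rw [Fin.mk.injEq] at h2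
          omega)
        (Measure.pi fun j => μ.map fun x => x j) (Measure.pi fun j => μ.map fun x => x j)
        (lawinj _ (by
          intro t t' h
          have h2 := π.injective (Fin.val_injective h)
          rw [Fin.mk.injEq] at h2
          exact Fin.ext (by omega)))
        (lawinj _ (by
          intro t t' h
          have h2 := π.injective (Fin.val_injective h)
          rw [Fin.mk.injEq] at h2
          exact Fin.ext (by omega)))
        hint2 hint2
      obtain ⟨iC, vC⟩ := key_int k φ hfeature P Xs hmeas hindep
        (fun _ => ((π ⟨0, by omega⟩ : Fin (2 * (d + 1))) : ℕ))
        (fun j => ((π ⟨(j : ℕ) + 1, by have := j.isLt; omega⟩ : Fin (2 * (d + 1))) : ℕ))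
        (by
          intro t t' h
          have h2 := π.injective (Fin.val_injective h)
          rw [Fin.mk.injEq] at h2
          omega)
        μ (Measure.pi fun j => μ.map fun x => x j)
        (hlaw _)
        (lawinj _ (by
          intro t t' h
          have h2 := π.injective (Fin.val_injective h)
          rw [Fin.mk.injEq] at h2
          exact Fin.ext (by omega)))
        hint1 hint2
      constructor
      · exact (iA.add iB).sub (iC.const_mul 2)
      · have e : (fun ω => gCore d k ((fun i : Fin (2 * (d + 1)) => Xs (i : ℕ) ω) ∘ ⇑π))
            = fun ω =>
              (∏ j, k j (Xs ((π ⟨0, by omega⟩ : Fin (2 * (d + 1))) : ℕ) ω j)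
                  (Xs ((π ⟨1, by omega⟩ : Fin (2 * (d + 1))) : ℕ) ω j))
              + (∏ j, k j (Xs ((π ⟨2 * (j : ℕ), by have := j.isLt; omega⟩ : Fin (2 * (d + 1))) : ℕ) ω j)
                  (Xs ((π ⟨2 * (j : ℕ) + 1, by have := j.isLt; omega⟩ : Fin (2 * (d + 1))) : ℕ) ω j))
              - 2 * ∏ j, k j (Xs ((π ⟨0, by omega⟩ : Fin (2 * (d + 1))) : ℕ) ω j)
                  (Xs ((π ⟨(j : ℕ) + 1, by have := j.isLt; omega⟩ : Fin (2 * (d + 1))) : ℕ) ω j) := rfl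
        rw [e, integral_sub, integral_add, integral_const_mul, vA, vB, vC]
        · exact iA
        · exact iB
        · exact iA.add iB
        · exact iC.const_mul 2
    calc ∫ ω, dhsicCore d k (fun i => Xs (i : ℕ) ω) ∂P
        = ∫ ω, (((2 * (d + 1)).factorial : ℝ))⁻¹ *
            ∑ π : Equiv.Perm (Fin (2 * (d + 1))),
              gCore d k ((fun i : Fin (2 * (d + 1)) => Xs (i : ℕ) ω) ∘ ⇑π) ∂P := rfl
      _ = (((2 * (d + 1)).factorial : ℝ))⁻¹ *
            ∫ ω, ∑ π : Equiv.Perm (Fin (2 * (d + 1))),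
              gCore d k ((fun i : Fin (2 * (d + 1)) => Xs (i : ℕ) ω) ∘ ⇑π) ∂P := integral_const_mul _ _
      _ = (((2 * (d + 1)).factorial : ℝ))⁻¹ *
            ∑ π : Equiv.Perm (Fin (2 * (d + 1))),
              ∫ ω, gCore d k ((fun i : Fin (2 * (d + 1)) => Xs (i : ℕ) ω) ∘ ⇑π) ∂P := by
          rw [integral_finset_sum _ fun π _ => (hterm π).1]
      _ = (((2 * (d + 1)).factorial : ℝ))⁻¹ *
            ∑ _π : Equiv.Perm (Fin (2 * (d + 1))),
              ((inner ℝ (∫ x, φ x ∂μ) (∫ x, φ x ∂μ) : ℝ)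
                + (inner ℝ (∫ x, φ x ∂(Measure.pi fun j => μ.map fun x => x j))
                    (∫ x, φ x ∂(Measure.pi fun j => μ.map fun x => x j)) : ℝ)
                - 2 * (inner ℝ (∫ x, φ x ∂μ)
                    (∫ x, φ x ∂(Measure.pi fun j => μ.map fun x => x j)) : ℝ)) := by
          rw [Finset.sum_congr rfl fun π _ => (hterm π).2]
      _ = ((inner ℝ (∫ x, φ x ∂μ) (∫ x, φ x ∂μ) : ℝ)
            + (inner ℝ (∫ x, φ x ∂(Measure.pi fun j => μ.map fun x => x j))
                (∫ x, φ x ∂(Measure.pi fun j => μ.map fun x => x j)) : ℝ)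
            - 2 * (inner ℝ (∫ x, φ x ∂μ)
                (∫ x, φ x ∂(Measure.pi fun j => μ.map fun x => x j)) : ℝ)) := by
          rw [Finset.sum_const, Finset.card_univ, Fintype.card_perm, Fintype.card_fin,
            nsmul_eq_mul, ← mul_assoc, inv_mul_cancel₀ hfac, one_mul]
      _ = ‖(∫ x, φ x ∂(Measure.pi fun j => μ.map fun x => x j)) - ∫ x, φ x ∂μ‖ ^ 2 := by
          rw [norm_sub_sq_real, ← real_inner_self_eq_norm_sq, ← real_inner_self_eq_norm_sq,
            real_inner_comm (∫ x, φ x ∂(Measure.pi fun j => μ.map fun x => x j)) (∫ x, φ x ∂μ)]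
          ring
  -- (e) V-statistic
  · intro n x
    rcases Nat.eq_zero_or_pos n with hn | hn
    · subst hn
      haveI : Nonempty (Fin (2 * (d + 1))) := ⟨⟨0, by omega⟩⟩
      simp [dhsicEstimator, Finset.univ_eq_empty]
    · have hn0 : (n : ℝ) ≠ 0 := Nat.cast_ne_zero.mpr (by omega)
      have hfac : (((2 * (d + 1)).factorial : ℕ) : ℝ) ≠ 0 :=
        Nat.cast_ne_zero.mpr (Nat.factorial_ne_zero _)
      -- collapse the permutation average
      have hcoll : ∑ f : Fin (2 * (d + 1)) → Fin n, dhsicCore d k (x ∘ f)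
          = ∑ f : Fin (2 * (d + 1)) → Fin n, gCore d k (x ∘ f) := by
        calc ∑ f : Fin (2 * (d + 1)) → Fin n, dhsicCore d k (x ∘ f)
            = ∑ f : Fin (2 * (d + 1)) → Fin n, ((((2 * (d + 1)).factorial : ℝ))⁻¹ *
                ∑ π : Equiv.Perm (Fin (2 * (d + 1))), gCore d k ((x ∘ f) ∘ π)) :=
              Finset.sum_congr rfl fun f _ => dhsicCore_eq d k (x ∘ f)
          _ = (((2 * (d + 1)).factorial : ℝ))⁻¹ *
                ∑ π : Equiv.Perm (Fin (2 * (d + 1))),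
                  ∑ f : Fin (2 * (d + 1)) → Fin n, gCore d k ((x ∘ f) ∘ π) := by
              rw [← Finset.mul_sum, Finset.sum_comm]
          _ = (((2 * (d + 1)).factorial : ℝ))⁻¹ *
                ∑ π : Equiv.Perm (Fin (2 * (d + 1))),
                  ∑ f : Fin (2 * (d + 1)) → Fin n, gCore d k (x ∘ f) := by
              congr 1
              exact Finset.sum_congr rfl fun π _ =>
                sum_fun_comp_perm (fun f => gCore d k (x ∘ f)) π
          _ = ∑ f : Fin (2 * (d + 1)) → Fin n, gCore d k (x ∘ f) := by
              rw [Finset.sum_const, Finset.card_univ, Fintype.card_perm, Fintype.card_fin,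
                nsmul_eq_mul, ← mul_assoc, inv_mul_cancel₀ hfac, one_mul]
      rw [hcoll]
      have h2m : (2 : ℕ) ≤ 2 * (d + 1) := by omega
      have hd2m : (d + 2 : ℕ) ≤ 2 * (d + 1) := by omega
      -- split the sum into three parts
      have hsplit : ∑ f : Fin (2 * (d + 1)) → Fin n, gCore d k (x ∘ f)
          = (∑ f : Fin (2 * (d + 1)) → Fin n,
              ∏ j, k j (x (f ⟨0, by omega⟩) j) (x (f ⟨1, by omega⟩) j))
            + (∑ f : Fin (2 * (d + 1)) → Fin n,
              ∏ j, k j (x (f ⟨2 * (j : ℕ), by have := j.isLt; omega⟩) j)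
                (x (f ⟨2 * (j : ℕ) + 1, by have := j.isLt; omega⟩) j))
            - 2 * (∑ f : Fin (2 * (d + 1)) → Fin n,
              ∏ j, k j (x (f ⟨0, by omega⟩) j)
                (x (f ⟨(j : ℕ) + 1, by have := j.isLt; omega⟩) j)) := by
        unfold gCore
        rw [Finset.sum_sub_distrib, Finset.sum_add_distrib, ← Finset.mul_sum]
        simp only [Function.comp_apply]
      rw [hsplit]
      -- A-term reduction
      have eA0 : Fin.castLE h2m (0 : Fin 2) = (⟨0, by omega⟩ : Fin (2 * (d + 1))) := by
        ext; simp
      have eA1 : Fin.castLE h2m (1 : Fin 2) = (⟨1, by omega⟩ : Fin (2 * (d + 1))) := by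
        ext; simp
      have hA : (∑ f : Fin (2 * (d + 1)) → Fin n,
            ∏ j, k j (x (f ⟨0, by omega⟩) j) (x (f ⟨1, by omega⟩) j))
          = (n : ℝ) ^ (2 * (d + 1) - 2) *
              ∑ g : Fin 2 → Fin n, ∏ j, k j (x (g 0) j) (x (g 1) j) := by
        have step := sum_comp_castLE h2m
          (fun g : Fin 2 → Fin n => ∏ j, k j (x (g 0) j) (x (g 1) j))
        refine Eq.trans ?_ step
        refine Finset.sum_congr rfl fun f _ => ?_
        simp only [eA0, eA1]
      have eC0 : Fin.castLE hd2m (0 : Fin (d + 2)) = (⟨0, by omega⟩ : Fin (2 * (d + 1))) := by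
        ext; simp
      have eC1 : ∀ j : Fin (d + 1),
          Fin.castLE hd2m (⟨(j : ℕ) + 1, by have := j.isLt; omega⟩ : Fin (d + 2))
            = (⟨(j : ℕ) + 1, by have := j.isLt; omega⟩ : Fin (2 * (d + 1))) := fun j => by
        ext; simp
      have hC : (∑ f : Fin (2 * (d + 1)) → Fin n,
            ∏ j, k j (x (f ⟨0, by omega⟩) j)
              (x (f ⟨(j : ℕ) + 1, by have := j.isLt; omega⟩) j))
          = (n : ℝ) ^ (2 * (d + 1) - (d + 2)) *
              ∑ g : Fin (d + 2) → Fin n,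
                ∏ j, k j (x (g 0) j) (x (g ⟨(j : ℕ) + 1, by have := j.isLt; omega⟩) j) := by
        have step := sum_comp_castLE hd2m (fun g : Fin (d + 2) → Fin n =>
          ∏ j, k j (x (g 0) j) (x (g ⟨(j : ℕ) + 1, by have := j.isLt; omega⟩) j))
        refine Eq.trans ?_ step
        refine Finset.sum_congr rfl fun f _ => ?_
        simp only [eC0, eC1]
      rw [hA, hC]
      unfold dhsicEstimator
      have e1 : 2 * (d + 1) - 2 = 2 * d := by omega
      have e2 : 2 * (d + 1) - (d + 2) = d := by omega
      rw [e1, e2]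
      generalize (∑ g : Fin 2 → Fin n, ∏ j, k j (x (g 0) j) (x (g 1) j)) = SA
      generalize (∑ f : Fin (2 * (d + 1)) → Fin n, ∏ j,
          k j (x (f ⟨2 * (j : ℕ), by have := j.isLt; omega⟩)  j)
            (x (f ⟨2 * (j : ℕ) + 1, by have := j.isLt; omega⟩) j)) = SB
      generalize (∑ g : Fin (d + 2) → Fin n, ∏ j,
          k j (x (g 0) j) (x (g ⟨(j : ℕ) + 1, by have := j.isLt; omega⟩) j)) = SC
      have p1 : ((n:ℝ) ^ (2 * (d + 1))) = (n:ℝ) ^ (2 * d) * (n:ℝ) ^ 2 := by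
        rw [show 2 * (d + 1) = 2 * d + 2 from by omega, pow_add]
      have hnp : ∀ m : ℕ, (n:ℝ) ^ m ≠ 0 := fun m => pow_ne_zero m hn0
      field_simp
      rw [p1]
      ring
end
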